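/- arXiv:math/0602555 — 2 statements merged into one kernel-verified Lean document; each statement's English description precedes it below -/
import Mathlib

section
/- Let (Ψ_n) be a sequence of automorphisms of F such that the currents Ψ_nη_A converge weakly-* to a geodesic current η. Let p ≠ q be points of ∂F and let p_n, q_n be nonempty freely reduced words with p_n → p and q_n → q (meaning: for every m, for all sufficiently large n the word p_n has length at least m and its length-m prefix equals the length-m prefix of p, and likewise for q_n and q). If there is a constant c > 0 such that η_A((∂Ψ_n × ∂Ψ_n)⁻¹(Cyl(p_n) × Cyl(q_n))) > c for all n, then η has a part concentrated on (p,q); in fact η({(p,q)}) ≥ c, while η_A({(p,q)}) = 0. -/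
open MeasureTheory Filter Topology
open scoped ENNReal NNReal

namespace FGC

noncomputable section

variable (k : ℕ)

/-- The alphabet `A = Σ ∪ Σ⁻¹`: a letter is a basis element together with a sign. -/
abbrev L := Fin k × Bool

/-- The inverse of a letter. -/
def linv (a : L k) : L k := (a.1, !a.2)

/-- A right-infinite word is (freely) reduced if no letter is followed by its inverse. -/
def Red (x : ℕ → L k) : Prop := ∀ n, x (n + 1) ≠ linv k (x n)

/-- The boundary `∂F`: the set of infinite freely reduced words in the alphabet `A`. -/
def Boundary : Type := { x : ℕ → L k // Red k x }

instance : TopologicalSpace (Boundary k) :=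
  inferInstanceAs (TopologicalSpace { x : ℕ → L k // Red k x })

instance : MeasurableSpace (Boundary k) := borel _

instance : BorelSpace (Boundary k) := ⟨rfl⟩

/-- The free group of rank `k`. -/
abbrev F := FreeGroup (Fin k)

/-- The word length `|v|` of an element of `F`. -/
def wordLength (v : F k) : ℕ := v.toWord.length

/-- The cyclically reduced length `‖v‖`: the minimal word length among conjugates of `v`. -/
def cyclLength (v : F k) : ℕ := sInf { n | ∃ g : F k, wordLength k (g * v * g⁻¹) = n }

/-- The cylinder `Cyl v ⊆ ∂F` of rays starting with the reduced word of `v`. -/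
def Cyl (v : F k) : Set (Boundary k) :=
  { x | ∀ i : Fin v.toWord.length, x.1 i = v.toWord.get i }

/-- The shift deleting the first letter of a ray. -/
def shift (x : ℕ → L k) : ℕ → L k := fun n => x (n + 1)

/-- Prepending a letter to a ray. -/
def cons (a : L k) (x : ℕ → L k) : ℕ → L k
  | 0 => a
  | n + 1 => x n

/-- Prepending a (reversed) finite word to a ray, performing free reduction. -/
def prependAux : List (L k) → (ℕ → L k) → ℕ → L k
  | [], x => x
  | a :: r, x => prependAux r (if x 0 = linv k a then shift k x else cons k a x)

theorem red_shift {x : ℕ → L k} (hx : Red k x) : Red k (shift k x) :=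
  fun n => hx (n + 1)

theorem red_cons {a : L k} {x : ℕ → L k} (hx : Red k x) (h : x 0 ≠ linv k a) :
    Red k (cons k a x) := by
  intro n
  cases n with
  | zero => exact h
  | succ m => exact hx m

theorem red_prependAux : ∀ (r : List (L k)) {x : ℕ → L k}, Red k x → Red k (prependAux k r x)
  | [], _, hx => hx
  | a :: r, x, hx => by
    by_cases h : x 0 = linv k a
    · simp only [prependAux, if_pos h]
      exact red_prependAux r (red_shift k hx)
    · simp only [prependAux, if_neg h]
      exact red_prependAux r (red_cons k hx h)

/-- The left-translation action of `F` on `∂F`: concatenate and freely reduce. -/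
def act (g : F k) (x : Boundary k) : Boundary k :=
  ⟨prependAux k g.toWord.reverse x.1, red_prependAux k _ x.2⟩

/-- The shift map `T : ∂F → ∂F`. -/
def Tmap (x : Boundary k) : Boundary k := ⟨shift k x.1, red_shift k x.2⟩

/-- The double boundary `∂²F`, as the complement of the diagonal. -/
def D2 : Set (Boundary k × Boundary k) := { p | p.1 ≠ p.2 }

/-- The diagonal action of `F` on `∂F × ∂F`. -/
def actPair (g : F k) (p : Boundary k × Boundary k) : Boundary k × Boundary k :=
  (act k g p.1, act k g p.2)

/-- The cylinder `Cyl[1,w]` of geodesics through the segment from `1` to `w`. -/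
def baseCyl (w : F k) : Set (Boundary k × Boundary k) :=
  { p | p.1.1 0 ≠ p.2.1 0 ∧ p.2 ∈ Cyl k w }

/-- The base-ball `B = Cyl[1,1]` of geodesics through the base point. -/
def baseBall : Set (Boundary k × Boundary k) := baseCyl k 1

/-- The cylinder `Cyl[x,y] = x · Cyl[1, x⁻¹y]`. -/
def Cyl2 (x y : F k) : Set (Boundary k × Boundary k) :=
  actPair k x '' baseCyl k (x⁻¹ * y)

/-- A geodesic current: a Borel measure on `∂F × ∂F` giving no mass to the diagonal,
invariant under the diagonal `F`-action, and finite on compact subsets of `∂²F`. -/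
def IsCurrent (η : Measure (Boundary k × Boundary k)) : Prop :=
  η { p | p.1 = p.2 } = 0 ∧
  (∀ g : F k, ∀ W : Set (Boundary k × Boundary k), MeasurableSet W →
    η (actPair k g ⁻¹' W) = η W) ∧
  (∀ K : Set (Boundary k × Boundary k), K ⊆ D2 k → IsCompact K → η K < ⊤)

/-- The element of `F` given by the first `n` letters of a ray. -/
def prefixEl (x : Boundary k) (n : ℕ) : F k :=
  FreeGroup.mk (List.ofFn fun i : Fin n => x.1 i)

/-- `b : ∂F → ∂F` is the boundary extension of the automorphism `Φ`: for every ray `x`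
and every `m`, the length-`m` prefix of `b x` is the length-`m` prefix of the reduced
word of `Φ (x|_n)` for all sufficiently large `n`. -/
def IsBdryExt (Φ : F k ≃* F k) (b : Boundary k → Boundary k) : Prop :=
  ∀ x : Boundary k, ∀ m : ℕ, ∃ N : ℕ, ∀ n ≥ N,
    (Φ (prefixEl k x n)).toWord.take m = List.ofFn fun i : Fin m => (b x).1 i

/-- The map `∂Φ × ∂Φ` on pairs. -/
def pairMap (b : Boundary k → Boundary k) (p : Boundary k × Boundary k) :
    Boundary k × Boundary k := (b p.1, b p.2)

/-- The length of an automorphism with boundary map `b`, w.r.t. the current `η`: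
`L(Φ) = η((∂Φ × ∂Φ)⁻¹ B)`. -/
def autLen (η : Measure (Boundary k × Boundary k)) (b : Boundary k → Boundary k) : ℝ≥0∞ :=
  η (pairMap k b ⁻¹' baseBall k)

/-- The subgroup of inner automorphisms. -/
abbrev Inn : Subgroup (MulAut (F k)) := (MulAut.conj : F k →* MulAut (F k)).range

/-- `Out(F) = Aut(F)/Inn(F)` as a coset space. -/
abbrev OutQ := MulAut (F k) ⧸ Inn k

/-- A simple automorphism: induced by a permutation of the basis, or inner. -/
def SimpleAut (Φ : MulAut (F k)) : Prop :=
  (∃ σ : Equiv.Perm (Fin k), ∀ i, Φ (FreeGroup.of i) = FreeGroup.of (σ i)) ∨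
  (∃ v : F k, ∀ x, Φ x = v * x * v⁻¹)

/-- A Whitehead automorphism of the second kind. -/
def Whitehead2 (τ : MulAut (F k)) : Prop :=
  ∃ a : Fin k, ∀ i : Fin k,
    τ (FreeGroup.of i) = FreeGroup.of i ∨
    τ (FreeGroup.of i) = FreeGroup.of i * FreeGroup.of a ∨
    τ (FreeGroup.of i) = (FreeGroup.of a)⁻¹ * FreeGroup.of i ∨
    τ (FreeGroup.of i) = (FreeGroup.of a)⁻¹ * FreeGroup.of i * FreeGroup.of a

/-- The space of frequency measures: finite `T`-invariant Borel measures on `∂F`. -/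
def FreqM : Type :=
  { μ : Measure (Boundary k) //
    IsFiniteMeasure μ ∧ ∀ W : Set (Boundary k), MeasurableSet W → μ (Tmap k ⁻¹' W) = μ W }

/-- The space of geodesic currents. -/
def Currents : Type := { η : Measure (Boundary k × Boundary k) // IsCurrent k η }

/-- Continuous functions on `∂F × ∂F` with compact support contained in `∂²F`;
these are the test functions for the weak-* topology on currents. -/
def TestF : Type :=
  { φ : Boundary k × Boundary k → ℝ //
    Continuous φ ∧ IsCompact (tsupport φ) ∧ tsupport φ ⊆ D2 k }

/-- The weak-* topology on frequency measures. -/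
instance : TopologicalSpace (FreqM k) :=
  ⨅ φ : C(Boundary k, ℝ),
    TopologicalSpace.induced (fun μ : FreqM k => ∫ x, φ x ∂μ.1) inferInstance

/-- The weak-* topology on geodesic currents. -/
instance : TopologicalSpace (Currents k) :=
  ⨅ φ : TestF k,
    TopologicalSpace.induced (fun η : Currents k => ∫ p, φ.1 p ∂η.1) inferInstance

/-- Convergence of a sequence of group elements (as reduced words) to a boundary ray. -/
def WordTendsto (pn : ℕ → F k) (p : Boundary k) : Prop :=
  ∀ m : ℕ, ∃ N : ℕ, ∀ n ≥ N, (pn n).toWord.take m = List.ofFn fun i : Fin m => p.1 i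

/-- The length of the maximal common initial segment of two rays. -/
def commonLen (p : Boundary k × Boundary k) : ℕ :=
  sSup { m : ℕ | ∀ i < m, p.1.1 i = p.2.1 i }

/-- A single letter as an element of `F`. -/
def el (a : L k) : F k := FreeGroup.mk [a]

/-- The product of per-letter constants over the reduced word of `w`. -/
def Cprod (C : L k → ℝ≥0) (w : F k) : ℝ≥0 := (w.toWord.map C).prod

-- ===================== auxiliary development =====================
section Aux

variable {k}

theorem linv_linv (a : L k) : linv k (linv k a) = a := by
  cases a with | mk i b => simp [linv]

theorem cancel_iff {a b : L k} : (a.1 = b.1 ∧ a.2 = !b.2) ↔ b = linv k a := by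
  constructor
  · rintro ⟨h1, h2⟩
    cases a; cases b
    simp_all [linv]
  · rintro rfl; simp [linv]

/-- Reducedness of a finite word. -/
def IsRedList (l : List (L k)) : Prop := List.Chain' (fun a b => b ≠ linv k a) l

theorem reduce_eq_self {l : List (L k)} (hl : IsRedList l) : FreeGroup.reduce l = l := by
  induction l with
  | nil => rfl
  | cons a t ih =>
    have ht : FreeGroup.reduce t = t := ih hl.tail
    rw [FreeGroup.reduce.cons, ht]
    cases t with
    | nil => rfl
    | cons b t' =>
      have hab : b ≠ linv k a := (List.isChain_cons_cons.mp hl).1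
      simp only
      rw [if_neg]
      intro hcond
      exact hab (cancel_iff.mp hcond)

theorem isRedList_reduce (l : List (L k)) : IsRedList (FreeGroup.reduce l) := by
  induction l with
  | nil => exact List.isChain_nil
  | cons a t ih =>
    rw [FreeGroup.reduce.cons]
    cases h : FreeGroup.reduce t with
    | nil => exact List.isChain_singleton a
    | cons b t' =>
      rw [h] at ih
      simp only
      by_cases hcond : a.1 = b.1 ∧ a.2 = !b.2
      · rw [if_pos hcond]; exact ih.tail
      · rw [if_neg hcond]
        exact List.isChain_cons_cons.mpr ⟨fun hba => hcond (cancel_iff.mpr hba), ih⟩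

theorem toWord_mk_of {l : List (L k)} (hl : IsRedList l) :
    (FreeGroup.mk l).toWord = l := by
  rw [FreeGroup.toWord_mk, reduce_eq_self hl]

theorem isRedList_toWord (v : F k) : IsRedList v.toWord := by
  rw [← FreeGroup.reduce_toWord]; exact isRedList_reduce _

theorem cancel_lemma : ∀ (n : ℕ) (l₁ l₂ : List (L k)), l₁.length ≤ n →
    IsRedList l₁ → IsRedList l₂ →
    ∃ s, s ≤ l₂.length ∧ s ≤ l₁.length ∧
      (FreeGroup.mk (l₁ ++ l₂)).toWord = l₁.take (l₁.length - s) ++ l₂.drop s := by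
  intro n
  induction n with
  | zero =>
    intro l₁ l₂ hlen h1 h2
    have : l₁ = [] := List.length_eq_zero_iff.mp (Nat.le_zero.mp hlen)
    subst this
    exact ⟨0, Nat.zero_le _, Nat.zero_le _, by simpa using toWord_mk_of h2⟩
  | succ n ih =>
    intro l₁ l₂ hlen h1 h2
    by_cases hred : IsRedList (l₁ ++ l₂)
    · exact ⟨0, Nat.zero_le _, Nat.zero_le _, by
        rw [toWord_mk_of hred]; simp⟩
    · have hfail : ¬ (∀ x ∈ l₁.getLast?, ∀ y ∈ l₂.head?, y ≠ linv k x) := by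
        intro hok
        exact hred (List.isChain_append.mpr ⟨h1, h2, hok⟩)
      push_neg at hfail
      obtain ⟨a, ha, b, hb, hab⟩ := hfail
      obtain ⟨l₁', rfl⟩ : ∃ l₁', l₁ = l₁' ++ [a] := by
        rcases l₁.eq_nil_or_concat with rfl | ⟨l₁', a', rfl⟩
        · simp at ha
        · rw [List.concat_eq_append, List.getLast?_concat] at ha
          rw [List.concat_eq_append]
          exact ⟨l₁', by rw [Option.mem_some_iff.mp ha]⟩
      obtain ⟨l₂', rfl⟩ : ∃ l₂', l₂ = b :: l₂' := by
        cases l₂ with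
        | nil => simp at hb
        | cons c t =>
          simp only [List.head?_cons, Option.mem_some_iff] at hb
          exact ⟨t, by rw [hb]⟩
      subst hab
      have hstep : FreeGroup.mk ((l₁' ++ [a]) ++ (linv k a :: l₂')) = FreeGroup.mk (l₁' ++ l₂') := by
        have : (l₁' ++ [a]) ++ (linv k a :: l₂') = l₁' ++ (a.1, a.2) :: (a.1, !a.2) :: l₂' := by
          simp [linv]
        rw [this]
        exact FreeGroup.reduce.exact (FreeGroup.reduce.Step.eq (FreeGroup.Red.Step.not))
      obtain ⟨s, hs2, hs1, heq⟩ := ih l₁' l₂' (by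
          have := hlen; simp at this; omega)
        (h1.prefix ⟨[a], rfl⟩) (h2.tail)
      refine ⟨s + 1, (by simpa using Nat.succ_le_succ hs2), ?_, ?_⟩
      · simp only [List.length_append, List.length_singleton]; omega
      rw [hstep, heq]
      have hl1 : (l₁' ++ [a]).length - (s + 1) = l₁'.length - s := by simp
      rw [hl1, List.take_append_of_le_length (by omega)]
      simp

end Aux
section Aux2

variable {k}

theorem isRedList_ofFn_shift (x : Boundary k) (m0 j : ℕ) :
    IsRedList (List.ofFn fun i : Fin j => x.1 (m0 + i)) := by
  rw [IsRedList, List.Chain', List.isChain_iff_getElem]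
  intro i h
  simp only [List.length_ofFn] at h
  simp only [List.getElem_ofFn]
  have h2 := x.2 (m0 + i)
  have e : m0 + (i + 1) = (m0 + i) + 1 := by omega
  rw [e]
  exact h2

theorem isRedList_ofFn (x : Boundary k) (n : ℕ) :
    IsRedList (List.ofFn fun i : Fin n => x.1 i) := by
  have := isRedList_ofFn_shift x 0 n
  simpa using this

theorem toWord_prefixEl (x : Boundary k) (n : ℕ) :
    (prefixEl k x n).toWord = List.ofFn fun i : Fin n => x.1 i :=
  toWord_mk_of (isRedList_ofFn x n)

theorem wordLength_prefixEl (x : Boundary k) (n : ℕ) :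
    wordLength k (prefixEl k x n) = n := by
  rw [wordLength, toWord_prefixEl]; simp

theorem get_ofFn_nat {α : Type*} {m : ℕ} (f : Fin m → α) (i : ℕ)
    (h : i < (List.ofFn f).length) :
    (List.ofFn f).get ⟨i, h⟩ = f ⟨i, by simpa using h⟩ := by
  simp [List.get_ofFn]

theorem get_toWord_prefixEl (x : Boundary k) (m i : ℕ)
    (h : i < (prefixEl k x m).toWord.length) :
    (prefixEl k x m).toWord.get ⟨i, h⟩ = x.1 i := by
  rw [List.get_of_eq (toWord_prefixEl x m), get_ofFn_nat]

theorem length_toWord_prefixEl (x : Boundary k) (m : ℕ) :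
    (prefixEl k x m).toWord.length = m := by
  rw [toWord_prefixEl]; simp

theorem mem_Cyl_of_forall {v : F k} {y : Boundary k}
    (h : ∀ i (hi : i < v.toWord.length), y.1 i = v.toWord.get ⟨i, hi⟩) : y ∈ Cyl k v :=
  fun i => h i.1 i.2

theorem forall_of_mem_Cyl {v : F k} {y : Boundary k} (h : y ∈ Cyl k v) :
    ∀ i (hi : i < v.toWord.length), y.1 i = v.toWord.get ⟨i, hi⟩ :=
  fun i hi => h ⟨i, hi⟩

theorem mem_Cyl_prefixEl {x y : Boundary k} {m : ℕ} :
    y ∈ Cyl k (prefixEl k x m) ↔ ∀ i, i < m → y.1 i = x.1 i := by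
  constructor
  · intro h i hi
    have hlen : i < (prefixEl k x m).toWord.length := by
      rw [length_toWord_prefixEl]; exact hi
    rw [forall_of_mem_Cyl h i hlen, get_toWord_prefixEl]
  · intro h
    refine mem_Cyl_of_forall fun i hi => ?_
    rw [get_toWord_prefixEl]
    exact h i (by rw [length_toWord_prefixEl] at hi; exact hi)

theorem Cyl_subset_of_take {v : F k} {x : Boundary k} {m : ℕ}
    (h : v.toWord.take m = List.ofFn fun i : Fin m => x.1 i) :
    Cyl k v ⊆ Cyl k (prefixEl k x m) := by
  intro y hy
  rw [mem_Cyl_prefixEl]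
  intro i hi
  have hlen : m ≤ v.toWord.length := by
    have := congrArg List.length h
    simp only [List.length_take, List.length_ofFn] at this
    omega
  have h1 : y.1 i = v.toWord.get ⟨i, lt_of_lt_of_le hi hlen⟩ :=
    forall_of_mem_Cyl hy i (lt_of_lt_of_le hi hlen)
  have h2 : (v.toWord.take m).get ⟨i, by simp; omega⟩ = v.toWord.get ⟨i, lt_of_lt_of_le hi hlen⟩ := by
    simp
  rw [h1, ← h2, List.get_of_eq h, get_ofFn_nat]

-- basic facts about `el` and word lengths
theorem toWord_el (a : L k) : (el k a).toWord = [a] :=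
  toWord_mk_of (List.isChain_singleton a)

theorem prefixEl_succ (x : Boundary k) (n : ℕ) :
    prefixEl k x (n + 1) = prefixEl k x n * el k (x.1 n) := by
  rw [prefixEl, prefixEl, el, FreeGroup.mul_mk]
  congr 1
  rw [List.ofFn_succ']
  simp

theorem wordLength_mul_le (u v : F k) :
    wordLength k (u * v) ≤ wordLength k u + wordLength k v := by
  conv_lhs => rw [← FreeGroup.mk_toWord (x := u), ← FreeGroup.mk_toWord (x := v)]
  rw [FreeGroup.mul_mk]
  have h := (FreeGroup.Red.sublist (FreeGroup.reduce.red
    (L := u.toWord ++ v.toWord))).length_le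
  rw [wordLength, FreeGroup.toWord_mk]
  simpa [wordLength] using h

theorem wordLength_hom_le (ψ : F k →* F k) {D : ℕ}
    (hD : ∀ a : L k, wordLength k (ψ (el k a)) ≤ D) (v : F k) :
    wordLength k (ψ v) ≤ D * wordLength k v := by
  have aux : ∀ l : List (L k), wordLength k (ψ (FreeGroup.mk l)) ≤ D * l.length := by
    intro l
    induction l with
    | nil =>
      have h1 : FreeGroup.mk ([] : List (L k)) = 1 := by
        rw [← FreeGroup.one_eq_mk]
      rw [h1, map_one]
      simp [wordLength, FreeGroup.toWord_one]
    | cons a t ih =>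
      have h1 : FreeGroup.mk (a :: t) = el k a * FreeGroup.mk t := by
        rw [el, FreeGroup.mul_mk]; rfl
      rw [h1, map_mul]
      calc wordLength k (ψ (el k a) * ψ (FreeGroup.mk t))
          ≤ wordLength k (ψ (el k a)) + wordLength k (ψ (FreeGroup.mk t)) :=
            wordLength_mul_le _ _
        _ ≤ D + D * t.length := add_le_add (hD a) ih
        _ = D * (a :: t).length := by simp [List.length_cons, Nat.mul_add, Nat.add_comm]
  have h2 := aux v.toWord
  rw [FreeGroup.mk_toWord] at h2
  exact h2

end Aux2
section Aux3

variable {k}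

theorem le_D_mul (Φ : F k ≃* F k) {D : ℕ}
    (hD : ∀ a : L k, wordLength k (Φ.symm (el k a)) ≤ D)
    (x : Boundary k) (n : ℕ) : n ≤ D * wordLength k (Φ (prefixEl k x n)) := by
  have h1 : wordLength k (prefixEl k x n) = n := wordLength_prefixEl x n
  have h2 := wordLength_hom_le (Φ.symm : F k ≃* F k).toMonoidHom
    (D := D) (fun a => hD a) (Φ (prefixEl k x n))
  have h3 : Φ.symm (Φ (prefixEl k x n)) = prefixEl k x n := Φ.symm_apply_apply _
  calc n = wordLength k (Φ.symm (Φ (prefixEl k x n))) := by rw [h3, h1]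
    _ ≤ D * wordLength k (Φ (prefixEl k x n)) := h2

theorem take_stable (Φ : F k ≃* F k) {C D : ℕ}
    (hC : ∀ a : L k, wordLength k (Φ (el k a)) ≤ C)
    (hD : ∀ a : L k, wordLength k (Φ.symm (el k a)) ≤ D)
    (hD0 : 0 < D) (x : Boundary k) (m n : ℕ) (hn : D * (m + C) ≤ n) :
    ∀ n', n ≤ n' →
      (Φ (prefixEl k x n')).toWord.take m = (Φ (prefixEl k x n)).toWord.take m := by
  intro n' hn'
  induction n', hn' using Nat.le_induction with
  | base => rfl
  | succ n' hnn' ih =>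
    rw [← ih]
    have hsplit : Φ (prefixEl k x (n' + 1)) =
        FreeGroup.mk ((Φ (prefixEl k x n')).toWord ++ (Φ (el k (x.1 n'))).toWord) := by
      rw [prefixEl_succ, map_mul]
      rw [← FreeGroup.mul_mk, FreeGroup.mk_toWord, FreeGroup.mk_toWord]
    obtain ⟨s, hs2, hs1, heq⟩ := cancel_lemma ((Φ (prefixEl k x n')).toWord.length)
      (Φ (prefixEl k x n')).toWord (Φ (el k (x.1 n'))).toWord le_rfl
      (isRedList_toWord _) (isRedList_toWord _)
    have hw1 : m + C ≤ (Φ (prefixEl k x n')).toWord.length := by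
      have h1 : n' ≤ D * wordLength k (Φ (prefixEl k x n')) := le_D_mul Φ hD x n'
      have h4 : D * (m + C) ≤ D * wordLength k (Φ (prefixEl k x n')) :=
        le_trans (le_trans hn hnn') h1
      exact Nat.le_of_mul_le_mul_left h4 hD0
    have hs2' : s ≤ C := le_trans hs2 (hC (x.1 n'))
    rw [hsplit, heq, List.take_append_of_le_length (by simp; omega), List.take_take,
      min_eq_left (by omega)]

theorem bprefix_eq (Φ : F k ≃* F k) {C D : ℕ}
    (hC : ∀ a : L k, wordLength k (Φ (el k a)) ≤ C)
    (hD : ∀ a : L k, wordLength k (Φ.symm (el k a)) ≤ D)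
    (hD0 : 0 < D) {b : Boundary k → Boundary k} (hb : IsBdryExt k Φ b)
    (x : Boundary k) (m : ℕ) :
    (List.ofFn fun i : Fin m => (b x).1 i) =
      (Φ (prefixEl k x (D * (m + C)))).toWord.take m := by
  obtain ⟨N, hN⟩ := hb x m
  have h1 := hN (max N (D * (m + C))) (le_max_left _ _)
  have h2 := take_stable Φ hC hD hD0 x m (D * (m + C)) le_rfl
    (max N (D * (m + C))) (le_max_right _ _)
  rw [← h1, h2]

theorem continuous_of_isBdryExt (hk : 0 < k) (Φ : F k ≃* F k)
    {b : Boundary k → Boundary k} (hb : IsBdryExt k Φ b) : Continuous b := by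
  classical
  set C := Finset.univ.sup (fun a : L k => wordLength k (Φ (el k a))) with hCdef
  set D := Finset.univ.sup (fun a : L k => wordLength k (Φ.symm (el k a))) with hDdef
  have hC : ∀ a : L k, wordLength k (Φ (el k a)) ≤ C :=
    fun a => Finset.le_sup (f := fun a : L k => wordLength k (Φ (el k a))) (Finset.mem_univ a)
  have hD : ∀ a : L k, wordLength k (Φ.symm (el k a)) ≤ D :=
    fun a => Finset.le_sup (f := fun a : L k => wordLength k (Φ.symm (el k a))) (Finset.mem_univ a)
  have hD0 : 0 < D := by
    set a0 : L k := (⟨0, hk⟩, true) with ha0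
    have h1 : 0 < wordLength k (Φ.symm (el k a0)) := by
      rcases Nat.eq_zero_or_pos (wordLength k (Φ.symm (el k a0))) with h | h
      · exfalso
        have h2 : (Φ.symm (el k a0)).toWord = [] := List.length_eq_zero_iff.mp h
        have h3 : Φ.symm (el k a0) = 1 := by
          have := congrArg FreeGroup.mk h2
          rw [FreeGroup.mk_toWord] at this
          rw [this, ← FreeGroup.one_eq_mk]
        have h4 : el k a0 = 1 := by
          have := congrArg Φ h3
          rw [Φ.apply_symm_apply, map_one] at this
          exact this
        have h5 := congrArg (fun v : F k => v.toWord.length) h4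
        simp only [toWord_el, FreeGroup.toWord_one, List.length_singleton,
          List.length_nil] at h5
        exact Nat.one_ne_zero h5
      · exact h
    exact lt_of_lt_of_le h1 (hD a0)
  -- continuity via locally constant coordinates
  haveI : Inhabited (L k) := ⟨(⟨0, hk⟩, true)⟩
  apply continuous_induced_rng.mpr
  apply continuous_pi
  intro i
  show Continuous fun x : Boundary k => (b x).1 i
  set N := D * ((i + 1) + C) with hN
  have hfact : (fun x : Boundary k => (b x).1 i) =
      (fun σ : Fin N → L k =>
        ((Φ (FreeGroup.mk (List.ofFn σ))).toWord.take (i + 1)).getD i default) ∘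
      (fun x : Boundary k => (fun j : Fin N => x.1 j)) := by
    funext x
    have h1 := bprefix_eq Φ hC hD hD0 hb x (i + 1)
    have h2 : (List.ofFn fun t : Fin (i + 1) => (b x).1 t).getD i default = (b x).1 i := by
      rw [List.getD_eq_getElem _ _ (by simp), List.getElem_ofFn]
    rw [Function.comp_apply, ← h2, h1]
    rfl
  rw [hfact]
  refine Continuous.comp ?_ ?_
  · exact continuous_of_discreteTopology
  · exact continuous_pi fun j => (continuous_apply (j : ℕ)).comp continuous_subtype_val

end Aux3
section Aux4

variable {k}

theorem isClosed_redSet : IsClosed {x : ℕ → L k | Red k x} := by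
  have h : {x : ℕ → L k | Red k x} = ⋂ n, {x : ℕ → L k | x (n + 1) ≠ linv k (x n)} := by
    ext x; simp [Red, Set.mem_iInter]
  rw [h]
  refine isClosed_iInter fun n => ?_
  have h2 : {x : ℕ → L k | x (n + 1) ≠ linv k (x n)} =
      (fun x : ℕ → L k => (x (n + 1), x n)) ⁻¹' {p : L k × L k | p.1 ≠ linv k p.2} := by
    rfl
  rw [h2]
  exact IsClosed.preimage ((continuous_apply (n + 1)).prodMk (continuous_apply n))
    (isClosed_discrete _)

instance : CompactSpace (Boundary k) :=
  isCompact_iff_compactSpace.mp (isClosed_redSet.isCompact)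

instance : SecondCountableTopology (Boundary k) :=
  inferInstanceAs (SecondCountableTopology ↥{x : ℕ → L k | Red k x})

theorem isClopen_coordSet (i : ℕ) (c : L k) :
    IsClopen {y : Boundary k | y.1 i = c} := by
  have h : {y : Boundary k | y.1 i = c} =
      (fun y : Boundary k => y.1 i) ⁻¹' {c} := rfl
  rw [h]
  have hc : Continuous fun y : Boundary k => y.1 i :=
    (continuous_apply i).comp continuous_subtype_val
  exact ⟨IsClosed.preimage hc (isClosed_discrete _), IsOpen.preimage hc (isOpen_discrete _)⟩

theorem isClopen_Cyl (v : F k) : IsClopen (Cyl k v) := by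
  have h : Cyl k v = ⋂ i : Fin v.toWord.length,
      {y : Boundary k | y.1 i = v.toWord.get i} := by
    ext y; simp only [Cyl, Set.mem_setOf_eq, Set.mem_iInter]
  rw [h]
  constructor
  · exact isClosed_iInter fun i => (isClopen_coordSet _ _).1
  · exact isOpen_iInter_of_finite fun i => (isClopen_coordSet _ _).2

theorem continuous_indicator_one {X : Type*} [TopologicalSpace X]
    {s : Set X} (hs : IsClopen s) :
    Continuous (s.indicator fun _ => (1 : ℝ)) := by
  classical
  have h : s.indicator (fun _ => (1 : ℝ)) =
      (fun b : Bool => if b then (1 : ℝ) else 0) ∘ s.boolIndicator := by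
    funext z
    by_cases hz : z ∈ s <;> simp [Set.indicator, Set.boolIndicator, hz]
  rw [h]
  exact continuous_of_discreteTopology.comp
    ((continuous_boolIndicator_iff_isClopen s).2 hs)

-- tail rays and the action of prefixes
/-- The tail of a ray after removing the first `m` letters. -/
def tailRay (x : Boundary k) (m : ℕ) : Boundary k :=
  ⟨fun i => x.1 (m + i), by
    intro n
    have h := x.2 (m + n)
    show x.1 (m + (n + 1)) ≠ linv k (x.1 (m + n))
    have e : m + (n + 1) = (m + n) + 1 := by omega
    rw [e]
    exact h⟩

theorem prependAux_prefix (x : Boundary k) :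
    ∀ m : ℕ, prependAux k (List.ofFn fun i : Fin m => x.1 i).reverse
      (fun i => x.1 (m + i)) = x.1 := by
  intro m
  induction m with
  | zero =>
    show prependAux k [] _ = x.1
    funext i
    show x.1 (0 + i) = x.1 i
    rw [Nat.zero_add]
  | succ m ih =>
    have h1 : (List.ofFn fun i : Fin (m + 1) => x.1 i).reverse =
        x.1 m :: (List.ofFn fun i : Fin m => x.1 i).reverse := by
      rw [List.ofFn_succ']
      simp
    rw [h1]
    show prependAux k _ (if (fun i => x.1 (m + 1 + i)) 0 = linv k (x.1 m)
      then shift k (fun i => x.1 (m + 1 + i))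
      else cons k (x.1 m) (fun i => x.1 (m + 1 + i))) = x.1
    have hne : (fun i => x.1 (m + 1 + i)) 0 ≠ linv k (x.1 m) := by
      show x.1 (m + 1 + 0) ≠ linv k (x.1 m)
      have e : m + 1 + 0 = m + 1 := by omega
      rw [e]
      exact x.2 m
    rw [if_neg hne]
    have h2 : cons k (x.1 m) (fun i => x.1 (m + 1 + i)) = fun i => x.1 (m + i) := by
      funext i
      cases i with
      | zero => show x.1 m = x.1 (m + 0); rw [Nat.add_zero]
      | succ n =>
        show x.1 (m + 1 + n) = x.1 (m + (n + 1))
        have e : m + 1 + n = m + (n + 1) := by omega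
        rw [e]
    rw [h2, ih]

theorem act_prefix_tailRay (x : Boundary k) (m : ℕ) :
    act k (prefixEl k x m) (tailRay x m) = x := by
  apply Subtype.ext
  show prependAux k (prefixEl k x m).toWord.reverse (tailRay x m).1 = x.1
  rw [toWord_prefixEl]
  exact prependAux_prefix x m

end Aux4
section Aux5

variable {k}

theorem tailRay_mem_Cyl_mid (q : Boundary k) (m0 j : ℕ) :
    tailRay q m0 ∈ Cyl k (FreeGroup.mk (List.ofFn fun i : Fin j => q.1 (m0 + i))) := by
  refine mem_Cyl_of_forall fun i hi => ?_
  rw [List.get_of_eq (toWord_mk_of (isRedList_ofFn_shift q m0 j)), get_ofFn_nat]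
  rfl

theorem prefixEl_add (q : Boundary k) (m0 j : ℕ) :
    prefixEl k q (m0 + j) =
      prefixEl k q m0 * FreeGroup.mk (List.ofFn fun i : Fin j => q.1 (m0 + i)) := by
  rw [prefixEl, prefixEl, FreeGroup.mul_mk]
  congr 1
  rw [List.ofFn_add]
  congr 1

theorem enn_zero_of_le (hk : 2 ≤ k) {t : ℝ≥0∞}
    (h : ∀ j : ℕ, 1 ≤ j →
      t ≤ ((2 * (k : ℝ≥0∞)) * (2 * (k : ℝ≥0∞) - 1) ^ (j - 1))⁻¹) : t = 0 := by
  by_contra ht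
  have h1 : t⁻¹ ≠ ⊤ := by simpa [ENNReal.inv_ne_top] using ht
  obtain ⟨N, hN⟩ := ENNReal.exists_nat_gt h1
  have hnat : N < 2 * k * (2 * k - 1) ^ N := by
    calc N < 2 ^ N := Nat.lt_two_pow_self
      _ ≤ (2 * k - 1) ^ N := Nat.pow_le_pow_left (by omega) N
      _ ≤ 2 * k * (2 * k - 1) ^ N := Nat.le_mul_of_pos_left _ (by omega)
  have h2 : ((2 * k - 1 : ℕ) : ℝ≥0∞) = 2 * (k : ℝ≥0∞) - 1 := by
    rw [ENNReal.natCast_sub]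
    push_cast
    rfl
  have hVc : ((2 * k * (2 * k - 1) ^ N : ℕ) : ℝ≥0∞)
      = 2 * (k : ℝ≥0∞) * (2 * (k : ℝ≥0∞) - 1) ^ N := by
    rw [Nat.cast_mul, Nat.cast_pow, h2]
    push_cast
    rfl
  have hNV : (N : ℝ≥0∞) ≤ 2 * (k : ℝ≥0∞) * (2 * (k : ℝ≥0∞) - 1) ^ N := by
    rw [← hVc]
    exact_mod_cast Nat.le_of_lt hnat
  have ht2 : t ≤ (2 * (k : ℝ≥0∞) * (2 * (k : ℝ≥0∞) - 1) ^ N)⁻¹ := by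
    have := h (N + 1) (by omega)
    simpa using this
  have hV : 2 * (k : ℝ≥0∞) * (2 * (k : ℝ≥0∞) - 1) ^ N ≤ t⁻¹ := by
    have h3 := ENNReal.inv_le_inv.mpr ht2
    rwa [inv_inv] at h3
  exact absurd (lt_of_lt_of_le hN (le_trans hNV hV)) (lt_irrefl _)

end Aux5
theorem part_concentrated_on_attractor (k : ℕ) (hk : 2 ≤ k)
    (μA : Measure (Boundary k)) [IsProbabilityMeasure μA]
    (hμA : ∀ v : F k, v ≠ 1 →
      μA (Cyl k v) = ((2 * k : ℝ≥0∞) * (2 * k - 1) ^ (wordLength k v - 1))⁻¹)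
    (ηA : Measure (Boundary k × Boundary k)) (hηA : IsCurrent k ηA)
    (hηA' : ∀ x y : F k, ηA (Cyl2 k x y) = μA (Cyl k (x⁻¹ * y)))
    (bd : MulAut (F k) → Boundary k → Boundary k)
    (hbd : ∀ Φ : MulAut (F k), IsBdryExt k Φ (bd Φ))
    (Ψ : ℕ → MulAut (F k))
    (η : Measure (Boundary k × Boundary k)) (hη : IsCurrent k η)
    (hconv : ∀ φ : TestF k,
      Tendsto (fun n => ∫ p, φ.1 p ∂(Measure.map (pairMap k (bd (Ψ n))) ηA))
        atTop (𝓝 (∫ p, φ.1 p ∂η)))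
    (p q : Boundary k) (hpq : p ≠ q)
    (pn qn : ℕ → F k) (hpn1 : ∀ n, pn n ≠ 1) (hqn1 : ∀ n, qn n ≠ 1)
    (hpn : WordTendsto k pn p) (hqn : WordTendsto k qn q)
    (c : ℝ≥0∞) (hc : 0 < c)
    (hbig : ∀ n, c < ηA (pairMap k (bd (Ψ n)) ⁻¹' (Cyl k (pn n) ×ˢ Cyl k (qn n)))) :
    c ≤ η {(p, q)} ∧ ηA {(p, q)} = 0 := by
  classical
  have hc_ne_top : c ≠ ⊤ := (hbig 0).ne_top
  have hdiff : ∃ j, p.1 j ≠ q.1 j := by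
    by_contra h
    push_neg at h
    exact hpq (Subtype.ext (funext h))
  set m0 := Nat.find hdiff with hm0def
  have hm0 : p.1 m0 ≠ q.1 m0 := Nat.find_spec hdiff
  have hm0min : ∀ i, i < m0 → p.1 i = q.1 i := fun i hi =>
    not_ne_iff.mp (Nat.find_min hdiff hi)
  have hdisj : ∀ m, m0 < m → Cyl k (prefixEl k p m) ∩ Cyl k (prefixEl k q m) = ∅ := by
    intro m hm
    rw [Set.eq_empty_iff_forall_notMem]
    rintro y ⟨hy1, hy2⟩
    exact hm0 ((mem_Cyl_prefixEl.mp hy1 m0 hm).symm.trans (mem_Cyl_prefixEl.mp hy2 m0 hm))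
  set K : ℕ → Set (Boundary k × Boundary k) :=
    fun m => Cyl k (prefixEl k p m) ×ˢ Cyl k (prefixEl k q m) with hKdef
  have hKclopen : ∀ m, IsClopen (K m) := fun m => (isClopen_Cyl _).prod (isClopen_Cyl _)
  have hKmeas : ∀ m, MeasurableSet (K m) := fun m => (hKclopen m).2.measurableSet
  have hKcomp : ∀ m, IsCompact (K m) := fun m => (hKclopen m).1.isCompact
  have hKD2 : ∀ m, m0 < m → K m ⊆ D2 k := by
    intro m hm z hz he
    have hmem : z.1 ∈ Cyl k (prefixEl k p m) ∩ Cyl k (prefixEl k q m) :=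
      ⟨hz.1, by rw [he]; exact hz.2⟩
    rw [hdisj m hm] at hmem
    exact hmem
  have hηKfin : ∀ m, m0 < m → η (K m) ≠ ⊤ :=
    fun m hm => (hη.2.2 (K m) (hKD2 m hm) (hKcomp m)).ne
  have hbc : ∀ n, Continuous (bd (Ψ n)) :=
    fun n => continuous_of_isBdryExt (by omega) (Ψ n) (hbd (Ψ n))
  have hpmc : ∀ n, Continuous (pairMap k (bd (Ψ n))) := by
    intro n
    show Continuous fun z : Boundary k × Boundary k => (bd (Ψ n) z.1, bd (Ψ n) z.2)
    exact ((hbc n).comp continuous_fst).prodMk ((hbc n).comp continuous_snd)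
  have hpmm : ∀ n, Measurable (pairMap k (bd (Ψ n))) := fun n => (hpmc n).measurable
  have hpreD2 : ∀ n m, m0 < m → (pairMap k (bd (Ψ n)) ⁻¹' K m) ⊆ D2 k := by
    intro n m hm z hz he
    have hmem : bd (Ψ n) z.1 ∈ Cyl k (prefixEl k p m) ∩ Cyl k (prefixEl k q m) :=
      ⟨hz.1, by rw [he]; exact hz.2⟩
    rw [hdisj m hm] at hmem
    exact hmem
  have hprefin : ∀ n m, m0 < m → ηA (pairMap k (bd (Ψ n)) ⁻¹' K m) ≠ ⊤ := by
    intro n m hm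
    refine (hηA.2.2 _ (hpreD2 n m hm) ?_).ne
    exact (IsClosed.preimage (hpmc n) (hKclopen m).1).isCompact
  have hkey : ∀ m, m0 < m → c ≤ η (K m) := by
    intro m hm
    set φf : Boundary k × Boundary k → ℝ := (K m).indicator (fun _ => (1 : ℝ)) with hφf
    have hφcont : Continuous φf := continuous_indicator_one (hKclopen m)
    have hsupp : Function.support φf ⊆ K m := by
      intro z hz
      by_contra hzK
      exact hz (Set.indicator_of_notMem hzK _)
    have hts : tsupport φf ⊆ K m := closure_minimal hsupp (hKclopen m).1
    have hlim : Tendsto (fun n => ∫ z, φf z ∂(Measure.map (pairMap k (bd (Ψ n))) ηA))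
        atTop (𝓝 (∫ z, φf z ∂η)) :=
      hconv ⟨φf, hφcont, IsClosed.isCompact (isClosed_tsupport φf),
        hts.trans (hKD2 m hm)⟩
    have hint1 : ∀ n, ∫ z, φf z ∂(Measure.map (pairMap k (bd (Ψ n))) ηA)
        = (ηA (pairMap k (bd (Ψ n)) ⁻¹' K m)).toReal := by
      intro n
      rw [hφf, MeasureTheory.integral_indicator_const (1 : ℝ) (hKmeas m), measureReal_def,
        Measure.map_apply (hpmm n) (hKmeas m), smul_eq_mul, mul_one]
    have hint2 : ∫ z, φf z ∂η = (η (K m)).toReal := by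
      rw [hφf, MeasureTheory.integral_indicator_const (1 : ℝ) (hKmeas m), measureReal_def,
        smul_eq_mul, mul_one]
    obtain ⟨N1, hN1⟩ := hpn m
    obtain ⟨N2, hN2⟩ := hqn m
    have hev : ∀ᶠ n in atTop,
        c.toReal ≤ ∫ z, φf z ∂(Measure.map (pairMap k (bd (Ψ n))) ηA) := by
      rw [eventually_atTop]
      refine ⟨max N1 N2, fun n hn => ?_⟩
      have hsub1 : Cyl k (pn n) ⊆ Cyl k (prefixEl k p m) :=
        Cyl_subset_of_take (hN1 n (le_trans (le_max_left _ _) hn))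
      have hsub2 : Cyl k (qn n) ⊆ Cyl k (prefixEl k q m) :=
        Cyl_subset_of_take (hN2 n (le_trans (le_max_right _ _) hn))
      have hle : c ≤ ηA (pairMap k (bd (Ψ n)) ⁻¹' K m) :=
        le_trans (hbig n).le
          (measure_mono (Set.preimage_mono (Set.prod_mono hsub1 hsub2)))
      rw [hint1 n]
      exact ENNReal.toReal_mono (hprefin n m hm) hle
    have hfinal : c.toReal ≤ (η (K m)).toReal := by
      have h5 := ge_of_tendsto hlim hev
      rwa [hint2] at h5
    exact (ENNReal.toReal_le_toReal hc_ne_top (hηKfin m hm)).1 hfinal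
  have hanti : Antitone (fun j : ℕ => K (m0 + 1 + j)) := by
    intro a b hab
    refine Set.prod_mono ?_ ?_ <;>
      exact fun y hy => mem_Cyl_prefixEl.mpr fun i hi =>
        mem_Cyl_prefixEl.mp hy i (by omega)
  have hiInter : ⋂ j : ℕ, K (m0 + 1 + j) = {(p, q)} := by
    ext z
    simp only [Set.mem_iInter, Set.mem_singleton_iff]
    constructor
    · intro h
      have h1 : z.1 = p := Subtype.ext (funext fun i =>
        mem_Cyl_prefixEl.mp (h i).1 i (by omega))
      have h2 : z.2 = q := Subtype.ext (funext fun i =>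
        mem_Cyl_prefixEl.mp (h i).2 i (by omega))
      rw [Prod.ext_iff]
      exact ⟨h1, h2⟩
    · rintro rfl j
      exact ⟨mem_Cyl_prefixEl.mpr fun i _ => rfl, mem_Cyl_prefixEl.mpr fun i _ => rfl⟩
  have htm := MeasureTheory.tendsto_measure_iInter_atTop (μ := η)
    (fun j => (hKmeas _).nullMeasurableSet) hanti ⟨0, hηKfin _ (by omega)⟩
  rw [hiInter] at htm
  constructor
  · exact ge_of_tendsto htm (Eventually.of_forall fun j => hkey _ (by omega))
  · set g := prefixEl k p m0 with hg
    have hgq : prefixEl k p m0 = prefixEl k q m0 := by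
      rw [prefixEl, prefixEl]
      have hfe : (fun i : Fin m0 => p.1 i) = fun i : Fin m0 => q.1 i :=
        funext fun i => hm0min i i.2
      rw [hfe]
    have he : ∀ j : ℕ, g⁻¹ * prefixEl k q (m0 + j)
        = FreeGroup.mk (List.ofFn fun i : Fin j => q.1 (m0 + i)) := by
      intro j
      rw [hg, hgq, prefixEl_add q m0 j, inv_mul_cancel_left]
    have hmem : ∀ j : ℕ, (p, q) ∈ Cyl2 k g (prefixEl k q (m0 + j)) := by
      intro j
      refine ⟨(tailRay p m0, tailRay q m0), ⟨?_, ?_⟩, ?_⟩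
      · show p.1 (m0 + 0) ≠ q.1 (m0 + 0)
        simpa using hm0
      · rw [he j]
        exact tailRay_mem_Cyl_mid q m0 j
      · show (act k g (tailRay p m0), act k g (tailRay q m0)) = (p, q)
        rw [Prod.ext_iff]
        constructor
        · rw [hg]; exact act_prefix_tailRay p m0
        · rw [hg, hgq]; exact act_prefix_tailRay q m0
    have hval : ∀ j : ℕ, 1 ≤ j →
        ηA {(p, q)} ≤ ((2 * (k : ℝ≥0∞)) * (2 * (k : ℝ≥0∞) - 1) ^ (j - 1))⁻¹ := by
      intro j hj
      have h1 : ηA {(p, q)} ≤ ηA (Cyl2 k g (prefixEl k q (m0 + j))) :=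
        measure_mono (Set.singleton_subset_iff.mpr (hmem j))
      rw [hηA' g (prefixEl k q (m0 + j)), he j] at h1
      have hne1 : FreeGroup.mk (List.ofFn fun i : Fin j => q.1 (m0 + i)) ≠ 1 := by
        intro hone
        have h2 := congrArg (fun v : F k => v.toWord.length) hone
        simp only [toWord_mk_of (isRedList_ofFn_shift q m0 j), FreeGroup.toWord_one,
          List.length_ofFn, List.length_nil] at h2
        omega
      have hlen : wordLength k (FreeGroup.mk (List.ofFn fun i : Fin j => q.1 (m0 + i))) = j := by
        rw [wordLength, toWord_mk_of (isRedList_ofFn_shift q m0 j)]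
        simp
      rw [hμA _ hne1, hlen] at h1
      exact h1
    exact enn_zero_of_le hk hval

end

end FGC
end

section
/- Let (Φ_n) be a sequence of automorphisms of F such that for every f ∈ F there is a constant M(f) with ||Φ_n(f)|| < M(f) for all n. Then there exist elements v_n ∈ F and a strictly increasing sequence of indices (n_i) such that the automorphisms x ↦ v_{n_i}⁻¹ Φ_{n_i}(x) v_{n_i} are all equal; equivalently, (Φ_n) has a subsequence that is constant in Out(F). -/
open MeasureTheory Filter Topology
open scoped ENNReal NNReal

namespace FGC

noncomputable section

variable (k : ℕ)

variable {α : Type*} [DecidableEq α]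

section WordAux
open FreeGroup List

/-- negation of a letter -/
def lneg (a : α × Bool) : α × Bool := (a.1, !a.2)

@[simp] lemma lneg_lneg (a : α × Bool) : lneg (lneg a) = a := by
  simp [lneg]

lemma invRev_eq (l : List (α × Bool)) : invRev l = (l.map lneg).reverse := rfl

/-- a reduced word -/
def Nice (l : List (α × Bool)) : Prop := l.Chain' fun a b => ¬(a.1 = b.1 ∧ a.2 = !b.2)

lemma nice_reduce (l : List (α × Bool)) : Nice (reduce l) := by
  induction l with
  | nil => simp [Nice]; exact List.isChain_nil
  | cons x l ih =>
    rw [reduce.cons]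
    rcases h : reduce l with _ | ⟨hd, tl⟩
    · simp [Nice]; exact List.isChain_singleton _
    · rw [h] at ih
      by_cases hc : x.1 = hd.1 ∧ x.2 = !hd.2
      · simp only [hc, if_true]
        exact ih.tail
      · simp only [hc, if_false]
        exact List.isChain_cons_cons.mpr ⟨hc, ih⟩

lemma Nice.reduce_eq {l : List (α × Bool)} (h : Nice l) : reduce l = l := by
  induction l with
  | nil => rfl
  | cons x l ih =>
    rw [reduce.cons, ih h.tail]
    cases l with
    | nil => rfl
    | cons hd tl =>
      have hx : ¬(x.1 = hd.1 ∧ x.2 = !hd.2) := (List.isChain_cons_cons.mp h).1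
      simp [hx]

lemma toWord_mk_nice {l : List (α × Bool)} (h : Nice l) : (FreeGroup.mk l).toWord = l := by
  rw [FreeGroup.toWord_mk, h.reduce_eq]

lemma nice_toWord (x : FreeGroup α) : Nice x.toWord := by
  rw [← FreeGroup.reduce_toWord]; exact nice_reduce _

lemma toWord_mul_junction {x y : FreeGroup α}
    (h : ∀ a ∈ x.toWord.getLast?, ∀ b ∈ y.toWord.head?, ¬(a.1 = b.1 ∧ a.2 = !b.2)) :
    (x * y).toWord = x.toWord ++ y.toWord := by
  conv_lhs => rw [← FreeGroup.mk_toWord (x := x), ← FreeGroup.mk_toWord (x := y)]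
  rw [FreeGroup.mul_mk]
  exact toWord_mk_nice (List.isChain_append.mpr ⟨nice_toWord x, nice_toWord y, h⟩)

lemma head?_invRev (l : List (α × Bool)) : (invRev l).head? = l.getLast?.map lneg := by
  rw [invRev_eq, List.head?_reverse, List.getLast?_map]

lemma getLast?_invRev (l : List (α × Bool)) : (invRev l).getLast? = l.head?.map lneg := by
  rw [invRev_eq, List.getLast?_reverse, List.head?_map]

lemma head?_inv (x : FreeGroup α) : x⁻¹.toWord.head? = x.toWord.getLast?.map lneg := by
  rw [FreeGroup.toWord_inv, head?_invRev]

lemma getLast?_inv (x : FreeGroup α) : x⁻¹.toWord.getLast? = x.toWord.head?.map lneg := by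
  rw [FreeGroup.toWord_inv, getLast?_invRev]

/-- cyclically reduced word -/
def CR (l : List (α × Bool)) : Prop :=
  ∀ a ∈ l.getLast?, ∀ b ∈ l.head?, ¬(a.1 = b.1 ∧ a.2 = !b.2)

lemma cyc_decomp (g : FreeGroup α) : ∃ p c : FreeGroup α,
    g = p * c * p⁻¹ ∧ g.toWord = p.toWord ++ c.toWord ++ p⁻¹.toWord ∧ CR c.toWord := by
  generalize hn : g.toWord.length = n
  induction n using Nat.strong_induction_on generalizing g with
  | _ n ih =>
  by_cases hcr : CR g.toWord
  · exact ⟨1, g, by group, by simp, hcr⟩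
  · rw [CR] at hcr
    push_neg at hcr
    obtain ⟨z, hz, hd0, hhd0, hz1, hz2⟩ := hcr
    rcases hw0 : g.toWord with _ | ⟨hd, tl⟩
    · rw [hw0] at hz; simp at hz
    · rw [hw0] at hz hhd0
      have hhd : hd = hd0 := by simpa using hhd0
      subst hhd
      rcases tl.eq_nil_or_concat with rfl | ⟨m0, z', htl⟩
      · have hzz : hd = z := by simpa using hz
        rw [← hzz] at hz2
        simp at hz2
      · subst htl
        rw [List.concat_eq_append] at hw0 hz ⊢
        have hz'' : z' = z := by
          have h5 : (hd :: (m0 ++ [z'])).getLast? = some z' := by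
            rw [← List.cons_append, List.getLast?_concat]
          rw [h5] at hz; simpa using hz
        subst hz''
        have hzval : z' = lneg hd := by
          apply Prod.ext <;> simp [lneg, hz1, hz2]
        have hNl : Nice (hd :: (m0 ++ [z'])) := by rw [← hw0]; exact nice_toWord g
        have hNm0 : Nice m0 := (List.isChain_append.mp hNl.tail).1
        have hm0len : m0.length + 2 = n := by
          rw [← hn, hw0]; simp
        have hmk : (FreeGroup.mk m0).toWord = m0 := toWord_mk_nice hNm0
        obtain ⟨p', c, h1, h2, h3⟩ := ih m0.length (by omega) (FreeGroup.mk m0) (by rw [hmk])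
        rw [hmk] at h2
        have hpw : (FreeGroup.mk (hd :: p'.toWord)).toWord = hd :: p'.toWord := by
          apply toWord_mk_nice
          apply List.isChain_cons.mpr
          refine ⟨?_, nice_toWord p'⟩
          intro y hy
          have hmy : (m0 ++ [z']).head? = some y := by
            rcases hpw0 : p'.toWord with _ | ⟨q, qs⟩
            · rw [hpw0] at hy; simp at hy
            · rw [hpw0] at hy
              have hyq : q = y := by simpa using hy
              subst hyq
              have hm0h : m0.head? = some q := by
                rw [h2, hpw0]; simp
              rcases m0 with _ | ⟨_, _⟩
              · simp at hm0h
              · simp at hm0h ⊢; simpa using hm0h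
          exact (List.isChain_cons.mp hNl).1 y hmy
        have hpinv : (FreeGroup.mk (hd :: p'.toWord))⁻¹.toWord
            = invRev p'.toWord ++ [z'] := by
          rw [FreeGroup.toWord_inv, hpw, hzval]
          simp [invRev_eq]
        refine ⟨FreeGroup.mk (hd :: p'.toWord), c, ?_, ?_, h3⟩
        · have hg : g = FreeGroup.mk (hd :: (m0 ++ [z'])) := by
            conv_lhs => rw [← FreeGroup.mk_toWord (x := g)]
            rw [hw0]
          have hmkinv : (FreeGroup.mk [hd])⁻¹ = FreeGroup.mk [z'] := by
            rw [FreeGroup.inv_mk]; congr 1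
            simp [invRev_eq, hzval]
          have hsplit : FreeGroup.mk (hd :: (m0 ++ [z']))
              = FreeGroup.mk [hd] * FreeGroup.mk m0 * (FreeGroup.mk [hd])⁻¹ := by
            rw [hmkinv, FreeGroup.mul_mk, FreeGroup.mul_mk]; simp
          have hp : FreeGroup.mk (hd :: p'.toWord) = FreeGroup.mk [hd] * p' := by
            conv_rhs => rw [← FreeGroup.mk_toWord (x := p')]
            rw [FreeGroup.mul_mk]; simp
          rw [hg, hsplit, h1, hp]
          group
        · rw [hpw, hpinv, h2, FreeGroup.toWord_inv]
          simp


lemma norm_def (x : FreeGroup α) : FreeGroup.norm x = x.toWord.length := rfl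

lemma norm_pow_le (z : FreeGroup α) (n : ℕ) : FreeGroup.norm (z ^ n) ≤ n * FreeGroup.norm z := by
  induction n with
  | zero => simp [FreeGroup.norm_one]
  | succ n ih =>
    rw [pow_succ]
    calc FreeGroup.norm (z ^ n * z) ≤ FreeGroup.norm (z ^ n) + FreeGroup.norm z :=
          FreeGroup.norm_mul_le _ _
    _ ≤ n * FreeGroup.norm z + FreeGroup.norm z := by omega
    _ = (n + 1) * FreeGroup.norm z := by ring

lemma pow_CR {c : FreeGroup α} (h : CR c.toWord) (n : ℕ) :
    FreeGroup.norm (c ^ (n + 1)) = (n + 1) * FreeGroup.norm c ∧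
    (c ^ (n + 1)).toWord.head? = c.toWord.head? ∧
    (c ^ (n + 1)).toWord.getLast? = c.toWord.getLast? := by
  rcases eq_or_ne c 1 with rfl | hc
  · simp [FreeGroup.norm_one]
  · induction n with
    | zero => simp
    | succ n ih =>
      have hjun : ∀ a ∈ (c ^ (n + 1)).toWord.getLast?, ∀ b ∈ c.toWord.head?,
          ¬(a.1 = b.1 ∧ a.2 = !b.2) := by
        rw [ih.2.2]; exact h
      have hw : (c ^ (n + 2)).toWord = (c ^ (n + 1)).toWord ++ c.toWord := by
        rw [pow_succ]; exact toWord_mul_junction hjun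
      have hne : c.toWord ≠ [] := fun hh => hc (FreeGroup.toWord_eq_nil_iff.mp hh)
      have hncpos : 0 < FreeGroup.norm c := by
        rw [norm_def]; exact List.length_pos_iff.mpr hne
      have hne1 : (c ^ (n + 1)).toWord ≠ [] := by
        intro hh
        have h0 : FreeGroup.norm (c ^ (n + 1)) = 0 := by rw [norm_def, hh]; rfl
        rw [ih.1] at h0
        rcases Nat.mul_eq_zero.mp h0 with h0 | h0 <;> omega
      refine ⟨?_, ?_, ?_⟩
      · have hthis : (c ^ (n + 2)).toWord.length
            = (c ^ (n + 1)).toWord.length + c.toWord.length := by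
          rw [hw, List.length_append]
        have e1 : FreeGroup.norm (c ^ (n + 2))
            = FreeGroup.norm (c ^ (n + 1)) + FreeGroup.norm c := hthis
        rw [e1, ih.1]; ring
      · rw [hw, List.head?_append_of_ne_nil _ hne1, ih.2.1]
      · rw [hw, List.getLast?_append_of_ne_nil _ hne]

lemma norm_conj_ge {c : FreeGroup α} (h : CR c.toWord) (u : FreeGroup α) :
    FreeGroup.norm c ≤ FreeGroup.norm (u * c * u⁻¹) := by
  rcases eq_or_ne c 1 with rfl | hc
  · simp [FreeGroup.norm_one]
  · have key : ∀ n : ℕ, (n + 1) * FreeGroup.norm c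
        ≤ 2 * FreeGroup.norm u + (n + 1) * FreeGroup.norm (u * c * u⁻¹) := by
      intro n
      have hconj : c ^ (n + 1) = u⁻¹ * ((u * c * u⁻¹) ^ (n + 1) * u) := by
        rw [conj_pow]; group
      calc (n + 1) * FreeGroup.norm c = FreeGroup.norm (c ^ (n + 1)) := (pow_CR h n).1.symm
      _ = FreeGroup.norm (u⁻¹ * ((u * c * u⁻¹) ^ (n + 1) * u)) := by rw [← hconj]
      _ ≤ FreeGroup.norm u⁻¹ + FreeGroup.norm ((u * c * u⁻¹) ^ (n + 1) * u) :=
          FreeGroup.norm_mul_le _ _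
      _ ≤ FreeGroup.norm u⁻¹ + (FreeGroup.norm ((u * c * u⁻¹) ^ (n + 1)) + FreeGroup.norm u) :=
          by have := FreeGroup.norm_mul_le ((u * c * u⁻¹) ^ (n + 1)) u; omega
      _ ≤ FreeGroup.norm u + ((n + 1) * FreeGroup.norm (u * c * u⁻¹) + FreeGroup.norm u) := by
          have h1 := norm_pow_le (u * c * u⁻¹) (n + 1)
          have h2 : FreeGroup.norm u⁻¹ = FreeGroup.norm u := FreeGroup.norm_inv_eq
          omega
      _ = 2 * FreeGroup.norm u + (n + 1) * FreeGroup.norm (u * c * u⁻¹) := by ring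
    by_contra hlt
    push_neg at hlt
    have hk := key (2 * FreeGroup.norm u + 1)
    have h2 : (2 * FreeGroup.norm u + 2) * (FreeGroup.norm (u * c * u⁻¹) + 1)
        ≤ (2 * FreeGroup.norm u + 2) * FreeGroup.norm c :=
      Nat.mul_le_mul_left _ hlt
    nlinarith


-- k-specific lemmas
lemma wordLength_eq (v : F k) : wordLength k v = FreeGroup.norm v := rfl

lemma cyclLength_le_conj (v h : F k) : cyclLength k v ≤ wordLength k (h * v * h⁻¹) :=
  Nat.sInf_le ⟨h, rfl⟩

lemma cyclLength_conj (w v : F k) : cyclLength k (w * v * w⁻¹) = cyclLength k v := by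
  unfold cyclLength
  congr 1
  ext n
  simp only [Set.mem_setOf_eq]
  constructor
  · rintro ⟨g, hg⟩
    refine ⟨g * w, ?_⟩
    rw [← hg]; congr 1; group
  · rintro ⟨g, hg⟩
    refine ⟨g * w⁻¹, ?_⟩
    rw [← hg]; congr 1; group

lemma cyclLength_CR {c : F k} (h : CR c.toWord) : cyclLength k c = FreeGroup.norm c := by
  apply _root_.le_antisymm
  · have h1 := cyclLength_le_conj k c 1
    simpa [wordLength_eq] using h1
  · refine le_csInf ⟨wordLength k (1 * c * 1⁻¹), ⟨1, rfl⟩⟩ ?_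
    rintro n ⟨u, rfl⟩
    rw [wordLength_eq]
    exact norm_conj_ge h u

lemma cyclLength_decomp {g p c : F k} (hg : g = p * c * p⁻¹) (h : CR c.toWord) :
    cyclLength k g = FreeGroup.norm c := by
  have h1 : cyclLength k g = cyclLength k c := by rw [hg, cyclLength_conj]
  rw [h1, cyclLength_CR k h]


lemma head_some_decomp {α : Type*} [DecidableEq α] {b : FreeGroup α} {t : α × Bool}
    (h1 : b.toWord.head? = some t) : ∃ m, b.toWord = t :: m := by
  rcases hw : b.toWord with _ | ⟨hd, tl⟩
  · rw [hw] at h1; simp at h1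
  · rw [hw] at h1
    simp only [List.head?_cons, Option.some.injEq] at h1
    exact ⟨tl, by rw [h1]⟩

lemma getLast_some_decomp {α : Type*} [DecidableEq α] {b : FreeGroup α} {t : α × Bool}
    (h1 : b.toWord.getLast? = some t) : ∃ m, b.toWord = m ++ [t] := by
  rcases b.toWord.eq_nil_or_concat with hw | ⟨m, z, hw⟩
  · rw [hw] at h1; simp at h1
  · rw [List.concat_eq_append] at hw
    rw [hw, List.getLast?_concat] at h1
    simp only [Option.some.injEq] at h1
    exact ⟨m, by rw [hw, h1]⟩

lemma inv_head_getLast {α : Type*} [DecidableEq α] {b : FreeGroup α} {t : α × Bool} :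
    b⁻¹.toWord.head? = some t ↔ b.toWord.getLast? = some (lneg t) := by
  rw [head?_inv]
  rcases hL : b.toWord.getLast? with _ | x
  · simp
  · simp only [Option.map_some, Option.some.injEq]
    constructor
    · rintro rfl; rw [lneg_lneg]
    · rintro h; rw [h, lneg_lneg]

lemma norm_conj_letter {α : Type*} [DecidableEq α] (b : FreeGroup α) (hb : b ≠ 1) (t : α × Bool) :
    FreeGroup.norm ((FreeGroup.mk [t])⁻¹ * b * FreeGroup.mk [t])
      + 2 * ((if b.toWord.head? = some t then 1 else 0)
          + (if b⁻¹.toWord.head? = some t then 1 else 0))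
    ≤ FreeGroup.norm b + 2 := by
  have hmt : (FreeGroup.mk [t])⁻¹ = FreeGroup.mk [lneg t] := by
    rw [FreeGroup.inv_mk]
    show FreeGroup.mk ([t].map lneg).reverse = _
    simp
  have hmkb : FreeGroup.mk b.toWord = b := FreeGroup.mk_toWord
  by_cases h1 : b.toWord.head? = some t <;> by_cases h2 : b⁻¹.toWord.head? = some t
  · -- both
    rw [inv_head_getLast] at h2
    obtain ⟨m1, hm1⟩ := head_some_decomp h1
    have hm1ne : m1 ≠ [] := by
      rintro rfl
      rw [hm1] at h2
      have h6 : t = lneg t := by simpa using h2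
      have h5 := congrArg Prod.snd h6
      simp [lneg] at h5
    obtain ⟨m2, z, hm2⟩ := m1.eq_nil_or_concat.resolve_left hm1ne
    rw [List.concat_eq_append] at hm2
    have hzt : z = lneg t := by
      have : b.toWord.getLast? = some z := by
        rw [hm1, hm2, ← List.cons_append, List.getLast?_concat]
      rw [this] at h2; simpa using h2
    subst hzt
    have hb' : b = FreeGroup.mk [t] * FreeGroup.mk m2 * (FreeGroup.mk [t])⁻¹ := by
      rw [hmt, FreeGroup.mul_mk, FreeGroup.mul_mk, ← hmkb, hm1, hm2]
      simp
    have hconj : (FreeGroup.mk [t])⁻¹ * b * FreeGroup.mk [t] = FreeGroup.mk m2 := by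
      rw [hb']; group
    have hnc : FreeGroup.norm (FreeGroup.mk m2) ≤ m2.length := FreeGroup.norm_mk_le
    have hlen : FreeGroup.norm b = m2.length + 2 := by
      rw [norm_def, hm1, hm2]; simp
    rw [hconj, if_pos h1, if_pos (inv_head_getLast.mpr h2)]
    omega
  · -- head only
    obtain ⟨m1, hm1⟩ := head_some_decomp h1
    have hb' : b = FreeGroup.mk [t] * FreeGroup.mk m1 := by
      rw [FreeGroup.mul_mk, ← hmkb, hm1]; rfl
    have hconj : (FreeGroup.mk [t])⁻¹ * b * FreeGroup.mk [t]
        = FreeGroup.mk (m1 ++ [t]) := by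
      rw [hb', ← FreeGroup.mul_mk]; group
    have hnc : FreeGroup.norm (FreeGroup.mk (m1 ++ [t])) ≤ m1.length + 1 := by
      have := FreeGroup.norm_mk_le (L₁ := m1 ++ [t])
      simpa using this
    have hlen : FreeGroup.norm b = m1.length + 1 := by
      rw [norm_def, hm1]; simp
    rw [hconj, if_pos h1, if_neg h2]
    omega
  · -- last only
    rw [inv_head_getLast] at h2
    obtain ⟨m1, hm1⟩ := getLast_some_decomp h2
    have hb' : b = FreeGroup.mk m1 * (FreeGroup.mk [t])⁻¹ := by
      rw [hmt, FreeGroup.mul_mk, ← hmkb, hm1]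
    have hconj : (FreeGroup.mk [t])⁻¹ * b * FreeGroup.mk [t]
        = FreeGroup.mk (lneg t :: m1) := by
      rw [hb']
      have hstep : (FreeGroup.mk [t])⁻¹ * (FreeGroup.mk m1 * (FreeGroup.mk [t])⁻¹) * FreeGroup.mk [t]
          = (FreeGroup.mk [t])⁻¹ * FreeGroup.mk m1 := by group
      rw [hstep, hmt, FreeGroup.mul_mk]; rfl
    have hnc : FreeGroup.norm (FreeGroup.mk (lneg t :: m1)) ≤ m1.length + 1 := by
      have h7 := FreeGroup.norm_mk_le (L₁ := lneg t :: m1)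
      simpa using h7
    have hlen : FreeGroup.norm b = m1.length + 1 := by
      rw [norm_def, hm1]; simp
    rw [hconj, if_neg h1, if_pos (inv_head_getLast.mpr h2)]
    omega
  · -- neither
    rw [if_neg h1, if_neg h2]
    have e1 := FreeGroup.norm_mul_le ((FreeGroup.mk [t])⁻¹ * b) (FreeGroup.mk [t])
    have e2 := FreeGroup.norm_mul_le ((FreeGroup.mk [t])⁻¹) b
    have e3 : FreeGroup.norm (FreeGroup.mk [t])⁻¹ = FreeGroup.norm (FreeGroup.mk [t]) :=
      FreeGroup.norm_inv_eq
    have e4 : FreeGroup.norm (FreeGroup.mk [t]) ≤ 1 := FreeGroup.norm_mk_le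
    have e5 := FreeGroup.norm_mul_le ((FreeGroup.mk [t])⁻¹ * b) (FreeGroup.mk [t])
    omega


lemma exists_conj_bound (M : ℕ) (Φ : MulAut (F k))
    (hM : ∀ z : F k, z ≠ 1 → FreeGroup.norm z ≤ 2 → cyclLength k (Φ z) < M) :
    ∃ v : F k, ∀ a : Fin k, FreeGroup.norm (v⁻¹ * Φ (FreeGroup.of a) * v) ≤ M + 1 := by
  classical
  set S : F k → ℕ := fun v => ∑ a : Fin k, FreeGroup.norm (v⁻¹ * Φ (FreeGroup.of a) * v) with hS
  obtain ⟨v, hv⟩ : ∃ v, S v = sInf (Set.range S) := by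
    obtain ⟨v, hv⟩ := Nat.sInf_mem (Set.range_nonempty S)
    exact ⟨v, hv⟩
  have hmin : ∀ u : F k, S v ≤ S u := fun u => by
    rw [hv]; exact Nat.sInf_le ⟨u, rfl⟩
  refine ⟨v, ?_⟩
  by_contra hcon
  push_neg at hcon
  obtain ⟨a₀, ha₀⟩ := hcon
  set b : Fin k → F k := fun a => v⁻¹ * Φ (FreeGroup.of a) * v with hbdef
  have ha₀' : M + 1 < FreeGroup.norm (b a₀) := ha₀
  have hbne : ∀ a, b a ≠ 1 := by
    intro a h
    have h2 : Φ (FreeGroup.of a) = 1 := by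
      have h3 : v * (v⁻¹ * Φ (FreeGroup.of a) * v) * v⁻¹ = Φ (FreeGroup.of a) := by group
      rw [← h3, show v⁻¹ * Φ (FreeGroup.of a) * v = b a from rfl, h, mul_one, mul_inv_cancel]
    exact FreeGroup.of_ne_one a (Φ.injective (by rw [h2, _root_.map_one]))
  have hcyc : ∀ a, cyclLength k (b a) < M := by
    intro a
    have h1 : b a = v⁻¹ * Φ (FreeGroup.of a) * (v⁻¹)⁻¹ := by rw [inv_inv]
    rw [h1, cyclLength_conj]
    exact hM _ (FreeGroup.of_ne_one a) (by rw [FreeGroup.norm_of]; omega)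
  have hcount : ∀ t : L k, (∑ a : Fin k,
      ((if (b a).toWord.head? = some t then 1 else 0)
        + (if (b a)⁻¹.toWord.head? = some t then 1 else 0))) ≤ k := by
    intro t
    have hS1 : S v ≤ S (v * FreeGroup.mk [t]) := hmin _
    have hS2 : S (v * FreeGroup.mk [t])
        = ∑ a : Fin k, FreeGroup.norm ((FreeGroup.mk [t])⁻¹ * b a * FreeGroup.mk [t]) := by
      apply Finset.sum_congr rfl
      intro a _
      congr 1
      show (v * FreeGroup.mk [t])⁻¹ * Φ (FreeGroup.of a) * (v * FreeGroup.mk [t])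
          = (FreeGroup.mk [t])⁻¹ * (v⁻¹ * Φ (FreeGroup.of a) * v) * FreeGroup.mk [t]
      group
    have hS3 : ∑ a : Fin k, (FreeGroup.norm ((FreeGroup.mk [t])⁻¹ * b a * FreeGroup.mk [t])
        + 2 * ((if (b a).toWord.head? = some t then 1 else 0)
          + (if (b a)⁻¹.toWord.head? = some t then 1 else 0)))
        ≤ ∑ a : Fin k, (FreeGroup.norm (b a) + 2) :=
      Finset.sum_le_sum fun a _ => norm_conj_letter (b a) (hbne a) t
    rw [Finset.sum_add_distrib, Finset.sum_add_distrib] at hS3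
    have hc1 : (∑ _a : Fin k, 2) = 2 * k := by simp [mul_comm]
    have hc2 : (∑ a : Fin k, 2 * ((if (b a).toWord.head? = some t then 1 else 0)
          + (if (b a)⁻¹.toWord.head? = some t then 1 else 0)))
        = 2 * ∑ a : Fin k, ((if (b a).toWord.head? = some t then 1 else 0)
          + (if (b a)⁻¹.toWord.head? = some t then 1 else 0)) := by
      rw [Finset.mul_sum]
    have hSv : (∑ a : Fin k, FreeGroup.norm (b a)) = S v := rfl
    rw [hc1, hc2, hSv] at hS3
    rw [hS2] at hS1
    omega
  obtain ⟨p, c, hpc, hword, hCRc⟩ := cyc_decomp (b a₀)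
  have hnormc : FreeGroup.norm c < M := by
    rw [← cyclLength_decomp k hpc hCRc]; exact hcyc a₀
  have hlen : FreeGroup.norm (b a₀)
      = p.toWord.length + c.toWord.length + p.toWord.length := by
    rw [norm_def, hword]
    simp [FreeGroup.toWord_inv, invRev_eq]
    omega
  have hplen : p.toWord ≠ [] := by
    intro h
    rw [h] at hlen
    have : FreeGroup.norm c = c.toWord.length := norm_def c
    simp at hlen
    omega
  obtain ⟨tstar, pw, hpw⟩ : ∃ t pw, p.toWord = t :: pw := by
    rcases hp : p.toWord with _ | ⟨x, xs⟩
    · exact absurd hp hplen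
    · exact ⟨x, xs, rfl⟩
  have hpinvne : p⁻¹.toWord ≠ [] := by
    rw [FreeGroup.toWord_inv, invRev_eq, hpw]
    simp
  have hhead : (b a₀).toWord.head? = some tstar := by
    rw [hword, hpw]
    simp [List.cons_append]
  have hlast : (b a₀).toWord.getLast? = some (lneg tstar) := by
    rw [hword, List.getLast?_append_of_ne_nil _ hpinvne, FreeGroup.toWord_inv,
      getLast?_invRev, hpw]
    simp
  have hheadinv : (b a₀)⁻¹.toWord.head? = some tstar := inv_head_getLast.mpr hlast
  have hpair : ∀ a : Fin k,
      (b a).toWord.head? = some tstar ∨ (b a)⁻¹.toWord.head? = some tstar := by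
    intro a
    by_contra hno
    push_neg at hno
    obtain ⟨hno1, hno2⟩ := hno
    have hAne : (b a₀).toWord ≠ [] := fun h => hbne a₀ (FreeGroup.toWord_eq_nil_iff.mp h)
    have hBne : (b a).toWord ≠ [] := fun h => hbne a (FreeGroup.toWord_eq_nil_iff.mp h)
    have hjun : ∀ x ∈ (b a₀).toWord.getLast?, ∀ y ∈ (b a).toWord.head?,
        ¬(x.1 = y.1 ∧ x.2 = !y.2) := by
      intro x hx y hy hcontra
      rw [Option.mem_def, hlast, Option.some.injEq] at hx
      subst hx
      have hye : y = tstar := by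
        apply Prod.ext
        · exact hcontra.1.symm
        · have h4 := hcontra.2
          simp only [lneg] at h4
          have h5 : tstar.2 = y.2 := by
            cases htb : tstar.2 <;> cases hyb : y.2 <;> simp_all
          exact h5.symm
      apply hno1
      rw [Option.mem_def] at hy
      rw [hy, hye]
    have hw : (b a₀ * b a).toWord = (b a₀).toWord ++ (b a).toWord := toWord_mul_junction hjun
    have hCRw : CR (b a₀ * b a).toWord := by
      rw [hw]
      intro x hx y hy hcontra
      rw [Option.mem_def, List.getLast?_append_of_ne_nil _ hBne] at hx
      rw [Option.mem_def, List.head?_append_of_ne_nil _ hAne, hhead, Option.some.injEq] at hy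
      subst hy
      have hxe : x = lneg tstar := by
        apply Prod.ext
        · exact hcontra.1
        · exact hcontra.2
      apply hno2
      apply inv_head_getLast.mpr
      rw [← hxe]
      exact hx
    have hwlen : M + 2 ≤ FreeGroup.norm (b a₀ * b a) := by
      have h5 : FreeGroup.norm (b a₀ * b a)
          = (b a₀).toWord.length + (b a).toWord.length := by
        rw [norm_def, hw, List.length_append]
      have h6 : M + 2 ≤ (b a₀).toWord.length := by
        have := ha₀'
        rw [norm_def] at this
        omega
      omega
    have hwcyc : cyclLength k (b a₀ * b a) < M := by
      have hprod : b a₀ * b a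
          = v⁻¹ * Φ (FreeGroup.of a₀ * FreeGroup.of a) * (v⁻¹)⁻¹ := by
        rw [_root_.map_mul, inv_inv]
        show v⁻¹ * Φ (FreeGroup.of a₀) * v * (v⁻¹ * Φ (FreeGroup.of a) * v)
            = v⁻¹ * (Φ (FreeGroup.of a₀) * Φ (FreeGroup.of a)) * v
        group
      rw [hprod, cyclLength_conj]
      apply hM
      · intro h
        have hnil : (FreeGroup.of a₀ * FreeGroup.of a).toWord = [] := by
          rw [h, FreeGroup.toWord_one]
        have heq : FreeGroup.of a₀ * FreeGroup.of a
            = FreeGroup.mk [(a₀, true), (a, true)] := by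
          rw [show FreeGroup.of a₀ = FreeGroup.mk [(a₀, true)] from rfl,
            show FreeGroup.of a = FreeGroup.mk [(a, true)] from rfl, FreeGroup.mul_mk]
          rfl
        have hnice : Nice [(a₀, true), (a, true)] := by
          apply List.isChain_cons_cons.mpr
          constructor
          · simp
          · simp [Nice]
        rw [heq, toWord_mk_nice hnice] at hnil
        simp at hnil
      · have h7 := FreeGroup.norm_mul_le (FreeGroup.of a₀) (FreeGroup.of a)
        rw [FreeGroup.norm_of, FreeGroup.norm_of] at h7
        omega
    rw [cyclLength_CR k hCRw] at hwcyc
    omega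
  have hsum : k + 1 ≤ ∑ a : Fin k,
      ((if (b a).toWord.head? = some tstar then 1 else 0)
        + (if (b a)⁻¹.toWord.head? = some tstar then 1 else 0)) := by
    have hterm : ∀ a : Fin k, (1 + if a = a₀ then 1 else 0)
        ≤ ((if (b a).toWord.head? = some tstar then 1 else 0)
          + (if (b a)⁻¹.toWord.head? = some tstar then 1 else 0)) := by
      intro a
      by_cases ha : a = a₀
      · subst ha
        rw [if_pos hhead, if_pos hheadinv, if_pos rfl]
      · rw [if_neg ha]
        rcases hpair a with h | h
        · rw [if_pos h]; omega
        · rw [if_pos h]; omega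
    calc k + 1 = ∑ a : Fin k, (1 + if a = a₀ then 1 else 0) := by
          rw [Finset.sum_add_distrib]
          simp [Finset.sum_ite_eq']
    _ ≤ _ := Finset.sum_le_sum fun a _ => hterm a
  have := hcount tstar
  omega

end WordAux

theorem bounded_words_constant_subsequence (k : ℕ) (hk : 2 ≤ k)
    (Φ : ℕ → MulAut (F k))
    (hb : ∀ f : F k, ∃ M : ℕ, ∀ n, cyclLength k (Φ n f) < M) :
    ∃ v : ℕ → F k, ∃ ι : ℕ → ℕ, StrictMono ι ∧
      ∀ i j, (MulAut.conj (v i))⁻¹ * Φ (ι i) = (MulAut.conj (v j))⁻¹ * Φ (ι j) := by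
  classical
  have hfin : {z : F k | FreeGroup.norm z ≤ 2}.Finite := by
    have h0 : {z : F k | FreeGroup.norm z ≤ 2}
        = FreeGroup.toWord ⁻¹' {l : List (Fin k × Bool) | l.length ≤ 2} := rfl
    rw [h0]
    exact Set.Finite.preimage FreeGroup.toWord_injective.injOn (List.finite_length_le _ 2)
  choose Mf hMf using hb
  set M : ℕ := (hfin.toFinset.sup Mf) + 1 with hMdef
  have hMbig : ∀ z : F k, z ≠ 1 → FreeGroup.norm z ≤ 2 → ∀ n, cyclLength k (Φ n z) < M := by
    intro z hz1 hz2 n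
    have h1 : cyclLength k (Φ n z) < Mf z := hMf z n
    have h2 : Mf z ≤ hfin.toFinset.sup Mf := Finset.le_sup (hfin.mem_toFinset.mpr hz2)
    omega
  have hex : ∀ n, ∃ v : F k,
      ∀ a : Fin k, FreeGroup.norm (v⁻¹ * Φ n (FreeGroup.of a) * v) ≤ M + 1 :=
    fun n => exists_conj_bound k M (Φ n) (fun z h1 h2 => hMbig z h1 h2 n)
  choose w hw using hex
  have hfin2 : Finite {g : F k // FreeGroup.norm g ≤ M + 1} := by
    have h0 : {g : F k | FreeGroup.norm g ≤ M + 1}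
        = FreeGroup.toWord ⁻¹' {l : List (Fin k × Bool) | l.length ≤ M + 1} := rfl
    have h1 : {g : F k | FreeGroup.norm g ≤ M + 1}.Finite := by
      rw [h0]
      exact Set.Finite.preimage FreeGroup.toWord_injective.injOn
        (List.finite_length_le _ (M + 1))
    exact h1.to_subtype
  let T := Fin k → {g : F k // FreeGroup.norm g ≤ M + 1}
  haveI : Finite T := by infer_instance
  let f : ℕ → T := fun n a => ⟨(w n)⁻¹ * Φ n (FreeGroup.of a) * w n, hw n a⟩
  obtain ⟨y, hy⟩ := Finite.exists_infinite_fiber f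
  have hyset : {n | f n = y}.Infinite := by
    rw [← Set.infinite_coe_iff]
    exact hy
  have hmono : StrictMono (Nat.nth (fun n => f n = y)) := Nat.nth_strictMono hyset
  have hmem : ∀ i, f (Nat.nth (fun n => f n = y) i) = y :=
    fun i => Nat.nth_mem_of_infinite hyset i
  refine ⟨fun i => w (Nat.nth (fun n => f n = y) i), Nat.nth (fun n => f n = y),
    hmono, ?_⟩
  intro i j
  set ni := Nat.nth (fun n => f n = y) i
  set nj := Nat.nth (fun n => f n = y) j
  have e1 : ∀ n, ∀ a : Fin k, ((MulAut.conj (w n))⁻¹ * Φ n) (FreeGroup.of a)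
      = (w n)⁻¹ * Φ n (FreeGroup.of a) * w n := by
    intro n a
    rw [MulAut.mul_apply, ← _root_.map_inv MulAut.conj (w n), MulAut.conj_apply, inv_inv]
  have hgen : ∀ a : Fin k,
      ((MulAut.conj (w ni))⁻¹ * Φ ni) (FreeGroup.of a)
        = ((MulAut.conj (w nj))⁻¹ * Φ nj) (FreeGroup.of a) := by
    intro a
    have h3 : f ni a = f nj a := by rw [hmem i, hmem j]
    have h4 : (w ni)⁻¹ * Φ ni (FreeGroup.of a) * w ni
        = (w nj)⁻¹ * Φ nj (FreeGroup.of a) * w nj := Subtype.ext_iff.mp h3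
    rw [e1, e1, h4]
  have hhom : (((MulAut.conj (w ni))⁻¹ * Φ ni) : MulAut (F k)).toMonoidHom
      = (((MulAut.conj (w nj))⁻¹ * Φ nj) : MulAut (F k)).toMonoidHom :=
    FreeGroup.ext_hom _ _ hgen
  apply MulEquiv.ext
  intro x
  exact DFunLike.congr_fun hhom x

end

end FGC
end
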